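/- Assume d_i^o > 0, d_i^i > 0 for all i ∈ N, m_{rs} > 0 for all r, s ∈ G, and d_r^o > 0, d_r^i > 0 for all r ∈ G. Let λ̂ = ℓ(Θ̂, Ω̂) − ℓ₀(Θ̃, Ω̃), where (Θ̂, Ω̂) are the group-constrained mixed-propensity maximum-likelihood values θ̂_{i,s}^o = d_{i,s}^o / m_{g i, s}, θ̂_{i,s}^i = d_{i,s}^i / m_{s, g i}, ω̂_{rs} = m_{rs}, and (Θ̃, Ω̃) are the DCSBM maximum-likelihood values θ̃_i^o = d_i^o / d_{g i}^o, θ̃_i^i = d_i^i / d_{g i}^i, ω̃_{rs} = m_{rs}, with the convention 0 log 0 = 0 wherever A i j = 0 or a degree is 0. Then λ̂ = Σ_{i∈N, s∈G} [ d_{i,s}^o log d_{i,s}^o + d_{i,s}^i log d_{i,s}^i ] − Σ_{i∈N} [ d_i^o log d_i^o + d_i^i log d_i^i ] − Σ_{r,s∈G} 2 m_{rs} log m_{rs} + Σ_{r∈G} [ d_r^o log d_r^o + d_r^i log d_r^i ]. -/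

import Mathlib

/-- `x log x`, extended by `0 log 0 = 0` (note `Real.log 0 = 0`). -/
noncomputable def xlog (x : ℝ) : ℝ := x * Real.log x

/-- Out-degree of node `i` to group `s`: `d_{i,s}^o = ∑_{j : g j = s} A i j`. -/
def dOut {N G : Type*} [Fintype N] [DecidableEq G] (g : N → G) (a : N → N → ℕ)
    (i : N) (s : G) : ℕ := ∑ j ∈ Finset.univ.filter (fun j => g j = s), a i j

/-- In-degree of node `i` from group `s`: `d_{i,s}^i = ∑_{j : g j = s} A j i`. -/
def dIn {N G : Type*} [Fintype N] [DecidableEq G] (g : N → G) (a : N → N → ℕ)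
    (i : N) (s : G) : ℕ := ∑ j ∈ Finset.univ.filter (fun j => g j = s), a j i

/-- Total out-degree of node `i`: `d_i^o = ∑_j A i j`. -/
def dTotOut {N : Type*} [Fintype N] (a : N → N → ℕ) (i : N) : ℕ := ∑ j : N, a i j

/-- Total in-degree of node `i`: `d_i^i = ∑_j A j i`. -/
def dTotIn {N : Type*} [Fintype N] (a : N → N → ℕ) (i : N) : ℕ := ∑ j : N, a j i

/-- Total out-degree of group `r`: `d_r^o = ∑_{i : g i = r} d_i^o`. -/
def dGrpOut {N G : Type*} [Fintype N] [DecidableEq G] (g : N → G) (a : N → N → ℕ)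
    (r : G) : ℕ := ∑ i ∈ Finset.univ.filter (fun i => g i = r), dTotOut a i

/-- Total in-degree of group `r`: `d_r^i = ∑_{i : g i = r} d_i^i`. -/
def dGrpIn {N G : Type*} [Fintype N] [DecidableEq G] (g : N → G) (a : N → N → ℕ)
    (r : G) : ℕ := ∑ i ∈ Finset.univ.filter (fun i => g i = r), dTotIn a i

/-- Number of edges from group `r` to group `s`. -/
def mEdges {N G : Type*} [Fintype N] [DecidableEq G] (g : N → G) (a : N → N → ℕ)
    (r s : G) : ℕ :=
  ∑ i ∈ Finset.univ.filter (fun i => g i = r),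
    ∑ j ∈ Finset.univ.filter (fun j => g j = s), a i j

/-- Poisson log-likelihood of the directed mixed-propensity model given the adjacency
matrix `a`. -/
noncomputable def loglik {N G : Type*} [Fintype N] (g : N → G) (a : N → N → ℕ)
    (θo θi : N → G → ℝ) (ω : G → G → ℝ) : ℝ :=
  ∑ i : N, ∑ j : N,
    ((a i j : ℝ) * Real.log (θo i (g j) * θi j (g i) * ω (g i) (g j))
      - θo i (g j) * θi j (g i) * ω (g i) (g j))

/-- Poisson log-likelihood of the directed DCSBM given the adjacency matrix `a`. -/
noncomputable def loglik0 {N G : Type*} [Fintype N] (g : N → G) (a : N → N → ℕ)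
    (θo θi : N → ℝ) (ω : G → G → ℝ) : ℝ :=
  ∑ i : N, ∑ j : N,
    ((a i j : ℝ) * Real.log (θo i * θi j * ω (g i) (g j))
      - θo i * θi j * ω (g i) (g j))

set_option linter.unusedSectionVars false

section Aux
variable {N G : Type*} [Fintype N] [Fintype G] [DecidableEq G] (g : N → G) (a : N → N → ℕ)

lemma sum_dOut' (r s : G) :
    ∑ i ∈ Finset.univ.filter (fun i => g i = r), dOut g a i s = mEdges g a r s := rfl

lemma sum_dIn' (r s : G) :
    ∑ j ∈ Finset.univ.filter (fun j => g j = s), dIn g a j r = mEdges g a r s :=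
  Finset.sum_comm

lemma helper1 (c : N → ℕ) (F : G → ℝ) :
    ∑ j : N, (c j : ℝ) * F (g j)
      = ∑ s : G, ((∑ j ∈ Finset.univ.filter (fun j => g j = s), c j : ℕ) : ℝ) * F s := by
  rw [← Finset.sum_fiberwise Finset.univ g (fun j => (c j : ℝ) * F (g j))]
  refine Finset.sum_congr rfl fun s _ => ?_
  push_cast
  rw [Finset.sum_mul]
  refine Finset.sum_congr rfl fun j hj => ?_
  rw [(Finset.mem_filter.mp hj).2]

lemma helper2 (F : N → G → ℝ) :
    ∑ j : N, F j (g j) = ∑ s : G, ∑ j ∈ Finset.univ.filter (fun j => g j = s), F j s := by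
  rw [← Finset.sum_fiberwise Finset.univ g (fun j => F j (g j))]
  exact Finset.sum_congr rfl fun s _ =>
    Finset.sum_congr rfl fun j hj => by rw [(Finset.mem_filter.mp hj).2]

lemma pt1 (hm : ∀ r s : G, 0 < mEdges g a r s) (i j : N) :
    ((a i j : ℝ) * Real.log ((dOut g a i (g j) : ℝ) / (mEdges g a (g i) (g j) : ℝ)
        * ((dIn g a j (g i) : ℝ) / (mEdges g a (g i) (g j) : ℝ))
        * (mEdges g a (g i) (g j) : ℝ))
      - (dOut g a i (g j) : ℝ) / (mEdges g a (g i) (g j) : ℝ)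
        * ((dIn g a j (g i) : ℝ) / (mEdges g a (g i) (g j) : ℝ))
        * (mEdges g a (g i) (g j) : ℝ))
    = (a i j : ℝ) * Real.log (dOut g a i (g j))
      + (a i j : ℝ) * Real.log (dIn g a j (g i))
      - (a i j : ℝ) * Real.log (mEdges g a (g i) (g j))
      - (dOut g a i (g j) : ℝ) * (dIn g a j (g i) : ℝ) / (mEdges g a (g i) (g j) : ℝ) := by
  have hM : (0 : ℝ) < (mEdges g a (g i) (g j) : ℝ) := by exact_mod_cast hm _ _
  have hprod : (dOut g a i (g j) : ℝ) / (mEdges g a (g i) (g j) : ℝ)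
        * ((dIn g a j (g i) : ℝ) / (mEdges g a (g i) (g j) : ℝ))
        * (mEdges g a (g i) (g j) : ℝ)
      = (dOut g a i (g j) : ℝ) * (dIn g a j (g i) : ℝ) / (mEdges g a (g i) (g j) : ℝ) := by
    field_simp
  rw [hprod]
  rcases Nat.eq_zero_or_pos (a i j) with h | h
  · simp [h]
  · have hD : 0 < dOut g a i (g j) := by
      unfold dOut
      exact lt_of_lt_of_le h (Finset.single_le_sum (f := fun k => a i k)
        (fun k _ => Nat.zero_le _) (by simp))
    have hE : 0 < dIn g a j (g i) := by
      unfold dIn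
      exact lt_of_lt_of_le h (Finset.single_le_sum (f := fun k => a k j)
        (fun k _ => Nat.zero_le _) (by simp))
    have hD' : ((dOut g a i (g j) : ℝ)) ≠ 0 := Nat.cast_ne_zero.mpr hD.ne'
    have hE' : ((dIn g a j (g i) : ℝ)) ≠ 0 := Nat.cast_ne_zero.mpr hE.ne'
    rw [Real.log_div (mul_ne_zero hD' hE') hM.ne', Real.log_mul hD' hE']
    ring

lemma pt0 (hdo : ∀ i, 0 < dTotOut a i) (hdi : ∀ i, 0 < dTotIn a i)
    (hgo : ∀ r : G, 0 < dGrpOut g a r) (hgi : ∀ r : G, 0 < dGrpIn g a r)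
    (hm : ∀ r s : G, 0 < mEdges g a r s) (i j : N) :
    ((a i j : ℝ) * Real.log ((dTotOut a i : ℝ) / (dGrpOut g a (g i) : ℝ)
        * ((dTotIn a j : ℝ) / (dGrpIn g a (g j) : ℝ)) * (mEdges g a (g i) (g j) : ℝ))
      - (dTotOut a i : ℝ) / (dGrpOut g a (g i) : ℝ)
        * ((dTotIn a j : ℝ) / (dGrpIn g a (g j) : ℝ)) * (mEdges g a (g i) (g j) : ℝ))
    = (a i j : ℝ) * Real.log (dTotOut a i)
      + (a i j : ℝ) * Real.log (dTotIn a j)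
      + (a i j : ℝ) * Real.log (mEdges g a (g i) (g j))
      - (a i j : ℝ) * Real.log (dGrpOut g a (g i))
      - (a i j : ℝ) * Real.log (dGrpIn g a (g j))
      - (dTotOut a i : ℝ) * (dTotIn a j : ℝ) * (mEdges g a (g i) (g j) : ℝ)
          / ((dGrpOut g a (g i) : ℝ) * (dGrpIn g a (g j) : ℝ)) := by
  have hO : ((dTotOut a i : ℝ)) ≠ 0 := Nat.cast_ne_zero.mpr (hdo i).ne'
  have hI : ((dTotIn a j : ℝ)) ≠ 0 := Nat.cast_ne_zero.mpr (hdi j).ne'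
  have hGo : ((dGrpOut g a (g i) : ℝ)) ≠ 0 := Nat.cast_ne_zero.mpr (hgo _).ne'
  have hGi : ((dGrpIn g a (g j) : ℝ)) ≠ 0 := Nat.cast_ne_zero.mpr (hgi _).ne'
  have hM : ((mEdges g a (g i) (g j) : ℝ)) ≠ 0 := Nat.cast_ne_zero.mpr (hm _ _).ne'
  have hprod : (dTotOut a i : ℝ) / (dGrpOut g a (g i) : ℝ)
        * ((dTotIn a j : ℝ) / (dGrpIn g a (g j) : ℝ)) * (mEdges g a (g i) (g j) : ℝ)
      = (dTotOut a i : ℝ) * (dTotIn a j : ℝ) * (mEdges g a (g i) (g j) : ℝ)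
          / ((dGrpOut g a (g i) : ℝ) * (dGrpIn g a (g j) : ℝ)) := by
    field_simp
  rw [hprod, Real.log_div (by positivity) (mul_ne_zero hGo hGi),
    Real.log_mul (mul_ne_zero hO hI) hM, Real.log_mul hO hI, Real.log_mul hGo hGi]
  ring

lemma sumA1 :
    ∑ i : N, ∑ j : N, (a i j : ℝ) * Real.log (dOut g a i (g j))
      = ∑ i : N, ∑ s : G, xlog (dOut g a i s) := by
  refine Finset.sum_congr rfl fun i _ => ?_
  rw [helper1 g (a i) (fun s => Real.log (dOut g a i s))]
  rfl

lemma sumA2 :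
    ∑ i : N, ∑ j : N, (a i j : ℝ) * Real.log (dIn g a j (g i))
      = ∑ i : N, ∑ s : G, xlog (dIn g a i s) := by
  rw [Finset.sum_comm]
  refine Finset.sum_congr rfl fun j _ => ?_
  rw [helper1 g (fun i => a i j) (fun r => Real.log (dIn g a j r))]
  rfl

lemma sumA3 :
    ∑ i : N, ∑ j : N, (a i j : ℝ) * Real.log (mEdges g a (g i) (g j))
      = ∑ r : G, ∑ s : G, xlog (mEdges g a r s) := by
  have step1 : ∀ i : N, ∑ j : N, (a i j : ℝ) * Real.log (mEdges g a (g i) (g j))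
      = ∑ s : G, (dOut g a i s : ℝ) * Real.log (mEdges g a (g i) s) := fun i =>
    helper1 g (a i) (fun s => Real.log (mEdges g a (g i) s))
  simp only [step1]
  rw [Finset.sum_comm]
  have step2 : ∀ s : G, ∑ i : N, (dOut g a i s : ℝ) * Real.log (mEdges g a (g i) s)
      = ∑ r : G, (mEdges g a r s : ℝ) * Real.log (mEdges g a r s) := fun s =>
    helper1 g (fun i => dOut g a i s) (fun r => Real.log (mEdges g a r s))
  simp only [step2]
  rw [Finset.sum_comm]
  rfl

lemma sumA4 (hm : ∀ r s : G, 0 < mEdges g a r s) :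
    ∑ i : N, ∑ j : N,
        (dOut g a i (g j) : ℝ) * (dIn g a j (g i) : ℝ) / (mEdges g a (g i) (g j) : ℝ)
      = ∑ r : G, ∑ s : G, (mEdges g a r s : ℝ) := by
  have step1 : ∀ i : N, ∑ j : N,
        (dOut g a i (g j) : ℝ) * (dIn g a j (g i) : ℝ) / (mEdges g a (g i) (g j) : ℝ)
      = ∑ s : G, ∑ j ∈ Finset.univ.filter (fun j => g j = s),
          (dOut g a i s : ℝ) * (dIn g a j (g i) : ℝ) / (mEdges g a (g i) s : ℝ) := fun i =>
    helper2 g (fun j s => (dOut g a i s : ℝ) * (dIn g a j (g i) : ℝ) / (mEdges g a (g i) s : ℝ))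
  simp only [step1]
  rw [helper2 g (fun i r => ∑ s : G, ∑ j ∈ Finset.univ.filter (fun j => g j = s),
      (dOut g a i s : ℝ) * (dIn g a j r : ℝ) / (mEdges g a r s : ℝ))]
  refine Finset.sum_congr rfl fun r _ => ?_
  rw [Finset.sum_comm]
  refine Finset.sum_congr rfl fun s _ => ?_
  have e1 : ∑ j ∈ Finset.univ.filter (fun j => g j = s), ((dIn g a j r : ℕ) : ℝ)
      = (mEdges g a r s : ℝ) := by rw [← Nat.cast_sum, sum_dIn']
  have e2 : ∑ i ∈ Finset.univ.filter (fun i => g i = r), ((dOut g a i s : ℕ) : ℝ)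
      = (mEdges g a r s : ℝ) := by rw [← Nat.cast_sum, sum_dOut']
  have hM : ((mEdges g a r s : ℝ)) ≠ 0 := Nat.cast_ne_zero.mpr (hm r s).ne'
  calc ∑ i ∈ Finset.univ.filter (fun i => g i = r),
        ∑ j ∈ Finset.univ.filter (fun j => g j = s),
          (dOut g a i s : ℝ) * (dIn g a j r : ℝ) / (mEdges g a r s : ℝ)
      = ∑ i ∈ Finset.univ.filter (fun i => g i = r),
          (dOut g a i s : ℝ) * ((∑ j ∈ Finset.univ.filter (fun j => g j = s),
            ((dIn g a j r : ℕ) : ℝ)) / (mEdges g a r s : ℝ)) := by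
        refine Finset.sum_congr rfl fun i _ => ?_
        rw [Finset.sum_div, Finset.mul_sum]
        exact Finset.sum_congr rfl fun j _ => by rw [mul_div_assoc]
    _ = (∑ i ∈ Finset.univ.filter (fun i => g i = r), ((dOut g a i s : ℕ) : ℝ))
          * ((mEdges g a r s : ℝ) / (mEdges g a r s : ℝ)) := by
        rw [e1, ← Finset.sum_mul]
    _ = (mEdges g a r s : ℝ) := by rw [e2, div_self hM, mul_one]

lemma sumB1 :
    ∑ i : N, ∑ j : N, (a i j : ℝ) * Real.log (dTotOut a i)
      = ∑ i : N, xlog (dTotOut a i) := by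
  refine Finset.sum_congr rfl fun i _ => ?_
  rw [← Finset.sum_mul, ← Nat.cast_sum]
  rfl

lemma sumB2 :
    ∑ i : N, ∑ j : N, (a i j : ℝ) * Real.log (dTotIn a j)
      = ∑ i : N, xlog (dTotIn a i) := by
  rw [Finset.sum_comm]
  refine Finset.sum_congr rfl fun j _ => ?_
  rw [← Finset.sum_mul, ← Nat.cast_sum]
  rfl

lemma sumB4 :
    ∑ i : N, ∑ j : N, (a i j : ℝ) * Real.log (dGrpOut g a (g i))
      = ∑ r : G, xlog (dGrpOut g a r) := by
  have per : ∀ i : N, ∑ j : N, (a i j : ℝ) * Real.log (dGrpOut g a (g i))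
      = (dTotOut a i : ℝ) * Real.log (dGrpOut g a (g i)) := fun i => by
    rw [← Finset.sum_mul, ← Nat.cast_sum]; rfl
  simp only [per]
  rw [helper1 g (dTotOut a) (fun r => Real.log (dGrpOut g a r))]
  rfl

lemma sumB5 :
    ∑ i : N, ∑ j : N, (a i j : ℝ) * Real.log (dGrpIn g a (g j))
      = ∑ s : G, xlog (dGrpIn g a s) := by
  rw [Finset.sum_comm]
  have per : ∀ j : N, ∑ i : N, (a i j : ℝ) * Real.log (dGrpIn g a (g j))
      = (dTotIn a j : ℝ) * Real.log (dGrpIn g a (g j)) := fun j => by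
    rw [← Finset.sum_mul, ← Nat.cast_sum]; rfl
  simp only [per]
  rw [helper1 g (dTotIn a) (fun s => Real.log (dGrpIn g a s))]
  rfl

lemma sumB6 (hgo : ∀ r : G, 0 < dGrpOut g a r) (hgi : ∀ r : G, 0 < dGrpIn g a r) :
    ∑ i : N, ∑ j : N,
        (dTotOut a i : ℝ) * (dTotIn a j : ℝ) * (mEdges g a (g i) (g j) : ℝ)
          / ((dGrpOut g a (g i) : ℝ) * (dGrpIn g a (g j) : ℝ))
      = ∑ r : G, ∑ s : G, (mEdges g a r s : ℝ) := by
  have step1 : ∀ i : N, ∑ j : N,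
        (dTotOut a i : ℝ) * (dTotIn a j : ℝ) * (mEdges g a (g i) (g j) : ℝ)
          / ((dGrpOut g a (g i) : ℝ) * (dGrpIn g a (g j) : ℝ))
      = ∑ s : G, ∑ j ∈ Finset.univ.filter (fun j => g j = s),
          (dTotOut a i : ℝ) * (dTotIn a j : ℝ) * (mEdges g a (g i) s : ℝ)
            / ((dGrpOut g a (g i) : ℝ) * (dGrpIn g a s : ℝ)) := fun i =>
    helper2 g (fun j s => (dTotOut a i : ℝ) * (dTotIn a j : ℝ) * (mEdges g a (g i) s : ℝ)
      / ((dGrpOut g a (g i) : ℝ) * (dGrpIn g a s : ℝ)))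
  simp only [step1]
  rw [helper2 g (fun i r => ∑ s : G, ∑ j ∈ Finset.univ.filter (fun j => g j = s),
      (dTotOut a i : ℝ) * (dTotIn a j : ℝ) * (mEdges g a r s : ℝ)
        / ((dGrpOut g a r : ℝ) * (dGrpIn g a s : ℝ)))]
  refine Finset.sum_congr rfl fun r _ => ?_
  rw [Finset.sum_comm]
  refine Finset.sum_congr rfl fun s _ => ?_
  have e1 : ∑ j ∈ Finset.univ.filter (fun j => g j = s), ((dTotIn a j : ℕ) : ℝ)
      = (dGrpIn g a s : ℝ) := by rw [← Nat.cast_sum]; rfl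
  have e2 : ∑ i ∈ Finset.univ.filter (fun i => g i = r), ((dTotOut a i : ℕ) : ℝ)
      = (dGrpOut g a r : ℝ) := by rw [← Nat.cast_sum]; rfl
  have hGo : ((dGrpOut g a r : ℝ)) ≠ 0 := Nat.cast_ne_zero.mpr (hgo r).ne'
  have hGi : ((dGrpIn g a s : ℝ)) ≠ 0 := Nat.cast_ne_zero.mpr (hgi s).ne'
  calc ∑ i ∈ Finset.univ.filter (fun i => g i = r),
        ∑ j ∈ Finset.univ.filter (fun j => g j = s),
          (dTotOut a i : ℝ) * (dTotIn a j : ℝ) * (mEdges g a r s : ℝ)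
            / ((dGrpOut g a r : ℝ) * (dGrpIn g a s : ℝ))
      = ∑ i ∈ Finset.univ.filter (fun i => g i = r),
          (dTotOut a i : ℝ) * ((∑ j ∈ Finset.univ.filter (fun j => g j = s),
            ((dTotIn a j : ℕ) : ℝ)) * ((mEdges g a r s : ℝ)
              / ((dGrpOut g a r : ℝ) * (dGrpIn g a s : ℝ)))) := by
        refine Finset.sum_congr rfl fun i _ => ?_
        rw [Finset.sum_mul, Finset.mul_sum]
        exact Finset.sum_congr rfl fun j _ => by ring
    _ = (∑ i ∈ Finset.univ.filter (fun i => g i = r), ((dTotOut a i : ℕ) : ℝ))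
          * ((dGrpIn g a s : ℝ) * ((mEdges g a r s : ℝ)
            / ((dGrpOut g a r : ℝ) * (dGrpIn g a s : ℝ)))) := by
        rw [e1, ← Finset.sum_mul]
    _ = (mEdges g a r s : ℝ) := by rw [e2]; field_simp

end Aux

/-- the log-likelihood ratio `λ̂` between the group-constrained
mixed-propensity MLE and the DCSBM MLE simplifies to the explicit degree-based expression
(equation (18) of the paper). -/
theorem llr_simplification
    {N G : Type*} [Fintype N] [Fintype G] [DecidableEq G]
    (g : N → G) (a : N → N → ℕ)
    (hdo : ∀ i, 0 < dTotOut a i) (hdi : ∀ i, 0 < dTotIn a i)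
    (hm : ∀ r s : G, 0 < mEdges g a r s)
    (hgo : ∀ r : G, 0 < dGrpOut g a r) (hgi : ∀ r : G, 0 < dGrpIn g a r) :
    loglik g a
        (fun i s => (dOut g a i s : ℝ) / (mEdges g a (g i) s : ℝ))
        (fun i s => (dIn g a i s : ℝ) / (mEdges g a s (g i) : ℝ))
        (fun r s => (mEdges g a r s : ℝ))
      - loglik0 g a
          (fun i => (dTotOut a i : ℝ) / (dGrpOut g a (g i) : ℝ))
          (fun i => (dTotIn a i : ℝ) / (dGrpIn g a (g i) : ℝ))
          (fun r s => (mEdges g a r s : ℝ))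
    = (∑ i : N, ∑ s : G, (xlog (dOut g a i s : ℝ) + xlog (dIn g a i s : ℝ)))
        - (∑ i : N, (xlog (dTotOut a i : ℝ) + xlog (dTotIn a i : ℝ)))
        - (∑ r : G, ∑ s : G, 2 * xlog (mEdges g a r s : ℝ))
        + (∑ r : G, (xlog (dGrpOut g a r : ℝ) + xlog (dGrpIn g a r : ℝ))) := by
  simp only [loglik, loglik0]
  rw [Finset.sum_congr rfl (fun i _ => Finset.sum_congr rfl (fun j _ => pt1 g a hm i j)),
    Finset.sum_congr rfl (fun i _ =>
      Finset.sum_congr rfl (fun j _ => pt0 g a hdo hdi hgo hgi hm i j))]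
  simp only [Finset.sum_add_distrib, Finset.sum_sub_distrib]
  rw [sumA1, sumA2, sumA3, sumA4 g a hm, sumB1, sumB2, sumB4, sumB5, sumB6 g a hgo hgi]
  simp only [xlog, two_mul, add_mul]
  simp only [Finset.sum_add_distrib]
  ring
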